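/- Let G be a Lie group acting smoothly on ℝⁿ and let f : ℝⁿ → ℝ be G-invariant, i.e., f(g·x) = f(x) for all g ∈ G and x ∈ ℝⁿ. Suppose x_k → x̄ in ℝⁿ, f is differentiable at each x_k, and ∇f(x_k) → v. Then ⟨v, w⟩ = 0 for every w ∈ Im d(θ^(x̄))_e, i.e., every limit of gradients of f at points converging to x̄ is orthogonal to the tangent space T_{x̄}(Gx̄) of the orbit of x̄. -/

import Mathlib

open scoped Manifold RealInnerProductSpace

/-- The tangent space `T_x(Gx) = Im d(θ^(x))_e` to the orbit of `x`, viewed as a linear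
subspace of `ℝⁿ`, where `θ^(x) : G → ℝⁿ, g ↦ θ g x` is the orbit map. -/
noncomputable def orbitTangent
    {E : Type*} [NormedAddCommGroup E] [NormedSpace ℝ E]
    {H : Type*} [TopologicalSpace H] (I : ModelWithCorners ℝ E H)
    {G : Type*} [TopologicalSpace G] [ChartedSpace H G] [Group G]
    {n : ℕ} (θ : G → EuclideanSpace ℝ (Fin n) → EuclideanSpace ℝ (Fin n))
    (x : EuclideanSpace ℝ (Fin n)) : Submodule ℝ (EuclideanSpace ℝ (Fin n)) :=
  LinearMap.range
    ((ContinuousLinearMap.toLinearMap :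
        (E →L[ℝ] EuclideanSpace ℝ (Fin n)) → E →ₗ[ℝ] EuclideanSpace ℝ (Fin n))
      (mfderiv I 𝓘(ℝ, EuclideanSpace ℝ (Fin n)) (fun g => θ g x) (1 : G)))

theorem stmt_8 {n : ℕ}
    {E : Type*} [NormedAddCommGroup E] [NormedSpace ℝ E] [FiniteDimensional ℝ E]
    {H : Type*} [TopologicalSpace H] {I : ModelWithCorners ℝ E H}
    {G : Type*} [TopologicalSpace G] [ChartedSpace H G] [Group G] [LieGroup I (⊤ : ℕ∞) G]
    (θ : G → EuclideanSpace ℝ (Fin n) → EuclideanSpace ℝ (Fin n))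
    (hsmooth : ContMDiff (I.prod 𝓘(ℝ, EuclideanSpace ℝ (Fin n)))
      𝓘(ℝ, EuclideanSpace ℝ (Fin n)) (⊤ : ℕ∞) (fun p : G × EuclideanSpace ℝ (Fin n) => θ p.1 p.2))
    (hmul : ∀ g h x, θ (g * h) x = θ g (θ h x))
    (hone : ∀ x, θ 1 x = x)
    (f : EuclideanSpace ℝ (Fin n) → ℝ)
    (hinv : ∀ g x, f (θ g x) = f x)
    (xbar v : EuclideanSpace ℝ (Fin n)) (x : ℕ → EuclideanSpace ℝ (Fin n))
    (hconv : Filter.Tendsto x Filter.atTop (nhds xbar))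
    (hdiff : ∀ k, DifferentiableAt ℝ f (x k))
    (hgrad : Filter.Tendsto (fun k => gradient f (x k)) Filter.atTop (nhds v)) :
    ∀ w ∈ orbitTangent I θ xbar, ⟪v, w⟫ = 0 := by
  set L : EuclideanSpace ℝ (Fin n) → (E →L[ℝ] EuclideanSpace ℝ (Fin n)) :=
    fun y => mfderiv I 𝓘(ℝ, EuclideanSpace ℝ (Fin n)) (fun g => θ g y) (1 : G) with hLdef
  -- continuity of y ↦ L y
  have hF : ContMDiffAt (𝓘(ℝ, EuclideanSpace ℝ (Fin n)).prod I) 𝓘(ℝ, EuclideanSpace ℝ (Fin n)) (⊤ : ℕ∞)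
      (Function.uncurry (fun (y : EuclideanSpace ℝ (Fin n)) (g : G) => θ g y)) (xbar, (1 : G)) :=
    (hsmooth.comp (contMDiff_snd.prodMk contMDiff_fst)).contMDiffAt
  have h := hF.mfderiv (m := (⊤ : ℕ∞)) (fun y g => θ g y) (fun _ => (1 : G)) contMDiffAt_const (by simp)
  have key : ∀ y : EuclideanSpace ℝ (Fin n),
      inTangentCoordinates I 𝓘(ℝ, EuclideanSpace ℝ (Fin n)) (fun _ => (1 : G))
        (fun y => θ 1 y)
        (fun y => (mfderiv I 𝓘(ℝ, EuclideanSpace ℝ (Fin n)) (fun g => θ g y) 1 :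
          E →L[ℝ] EuclideanSpace ℝ (Fin n))) xbar y = L y := by
    intro y
    change inTangentCoordinates I 𝓘(ℝ, EuclideanSpace ℝ (Fin n)) (fun _ => (1 : G))
      (fun y => θ 1 y) L xbar y = L y
    rw [inTangentCoordinates_eq, tangentBundleCore_coordChange_model_space]
    · apply ContinuousLinearMap.ext; intro u
      simp only [ContinuousLinearMap.comp_apply, ContinuousLinearMap.id_apply, hLdef]
      exact congrArg _ ((tangentBundleCore I G).coordChange_self (achart _ (1 : G)) 1
        (mem_chart_source H 1) u)
    · exact mem_chart_source H 1
    · exact Set.mem_univ _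
  have hLcont : ContinuousAt L xbar := by
    have h' := h.continuousAt
    have heq : (inTangentCoordinates I 𝓘(ℝ, EuclideanSpace ℝ (Fin n)) (fun _ => (1 : G))
        (fun y => θ 1 y)
        (fun y => (mfderiv I 𝓘(ℝ, EuclideanSpace ℝ (Fin n)) (fun g => θ g y) 1 :
          E →L[ℝ] EuclideanSpace ℝ (Fin n))) xbar) = L :=
      funext key
    rw [← heq]
    exact h'
  have hLtend : Filter.Tendsto (fun k => L (x k)) Filter.atTop (nhds (L xbar)) :=
    (hLcont.tendsto).comp hconv
  -- smoothness of orbit maps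
  have horb : ∀ y : EuclideanSpace ℝ (Fin n),
      MDifferentiableAt I 𝓘(ℝ, EuclideanSpace ℝ (Fin n)) (fun g : G => θ g y) (1 : G) := by
    intro y
    exact ((hsmooth.comp (contMDiff_id.prodMk contMDiff_const)).contMDiffAt).mdifferentiableAt
      (by simp)
  -- for each k, ⟪∇f (x k), L (x k) u⟫ = 0
  have hzero : ∀ (k : ℕ) (u : E), ⟪gradient f (x k), L (x k) u⟫ = 0 := by
    intro k u
    have hcst : mfderiv I 𝓘(ℝ, ℝ) (fun g : G => f (θ g (x k))) (1 : G) = 0 := by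
      have : (fun g : G => f (θ g (x k))) = fun _ => f (x k) := by
        funext g; exact hinv g (x k)
      rw [this]; exact mfderiv_const
    have hfd : MDifferentiableAt 𝓘(ℝ, EuclideanSpace ℝ (Fin n)) 𝓘(ℝ, ℝ) f
        ((fun g : G => θ g (x k)) 1) := by
      rw [mdifferentiableAt_iff_differentiableAt]
      rw [show (fun g : G => θ g (x k)) 1 = x k from hone (x k)]
      exact hdiff k
    have hcomp := mfderiv_comp (I' := 𝓘(ℝ, EuclideanSpace ℝ (Fin n))) (1 : G) hfd (horb (x k))
    have hC : (mfderiv 𝓘(ℝ, EuclideanSpace ℝ (Fin n)) 𝓘(ℝ, ℝ) f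
        ((fun g : G => θ g (x k)) 1)).comp (L (x k)) = 0 := by
      rw [hLdef]; exact hcomp.symm.trans hcst
    have happ := ContinuousLinearMap.ext_iff.1 hC u
    erw [ContinuousLinearMap.comp_apply, ContinuousLinearMap.zero_apply] at happ
    rw [show (fun g : G => θ g (x k)) 1 = x k from hone (x k), mfderiv_eq_fderiv] at happ
    rw [show gradient f (x k)
      = (InnerProductSpace.toDual ℝ (EuclideanSpace ℝ (Fin n))).symm (fderiv ℝ f (x k)) from rfl]
    rw [InnerProductSpace.toDual_symm_apply]
    exact happ
  intro w hw
  obtain ⟨u, hu⟩ := hw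
  have h1 : Filter.Tendsto (fun k => ⟪gradient f (x k), L (x k) u⟫) Filter.atTop
      (nhds ⟪v, L xbar u⟫) := by
    have hp : Filter.Tendsto (fun k => (gradient f (x k), L (x k) u)) Filter.atTop
        (nhds (v, L xbar u)) :=
      hgrad.prodMk_nhds
        (((ContinuousLinearMap.apply (E := E) ℝ (EuclideanSpace ℝ (Fin n))
          u).continuous.continuousAt.tendsto).comp hLtend)
    exact (continuous_inner.continuousAt.tendsto.comp hp)
  have h2 : Filter.Tendsto (fun k => ⟪gradient f (x k), L (x k) u⟫) Filter.atTop (nhds 0) := by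
    simp only [hzero]; exact tendsto_const_nhds
  have h3 := tendsto_nhds_unique h1 h2
  rw [← hu]
  exact h3
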